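/- For every ε ∈ Σ'' with ε₀ ≠ 1, the points J_r(ε) and J_r(σ̂(ε)) both lie in [0,1)², and the semiconjugacy identity J_r(σ̂(ε)) = B̂_r(J_r(ε)) holds. -/

import Mathlib

open MeasureTheory
open scoped ENNReal

/-- The two-sided shift on `Σ = {0,1,2}^ℤ`. -/
def shiftMap (ε : ℤ → Fin 3) : ℤ → Fin 3 := fun n => ε (n + 1)

/-- The partition points `α₀ = 0`, `α₁ = r₀`, `α₂ = r₀ + r₁`. -/
def alphaOf (r : Fin 3 → ℝ) : Fin 3 → ℝ := ![0, r 0, r 0 + r 1]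

/-- The closed baker's map `B̂_r` on the square `[0,1)²` (extended arbitrarily to `ℝ²`):
`(q,p)` with `q ∈ [α_ε, α_ε + r_ε)` is mapped to `((q-α_ε)/r_ε, r_ε p + α_ε)`. -/
noncomputable def bakerMap (r : Fin 3 → ℝ) : ℝ × ℝ → ℝ × ℝ := fun x =>
  if x.1 < r 0 then (x.1 / r 0, r 0 * x.2)
  else if x.1 < r 0 + r 1 then ((x.1 - r 0) / r 1, r 1 * x.2 + r 0)
  else ((x.1 - (r 0 + r 1)) / r 2, r 2 * x.2 + (r 0 + r 1))

/-- The coding map `J_r : Σ → [0,1]²`. -/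
noncomputable def codingMap (r : Fin 3 → ℝ) (ε : ℤ → Fin 3) : ℝ × ℝ :=
  (∑' k : ℕ, (∏ i ∈ Finset.range k, r (ε (i : ℤ))) * alphaOf r (ε (k : ℤ)),
   ∑' k : ℕ, (∏ i ∈ Finset.range k, r (ε (-(i + 1) : ℤ))) * alphaOf r (ε (-(k + 1) : ℤ)))

/-- The unit square `[0,1) × [0,1)`. -/
def unitSquare : Set (ℝ × ℝ) := Set.Ico 0 1 ×ˢ Set.Ico 0 1

/-- The complement `Σ \ Σ''` of the good set `Σ''`. -/
def badSet : Set (ℤ → Fin 3) :=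
  {ε | (∀ n : ℤ, n ≤ -1 → ε n = 2) ∧ ε 0 ≠ 1} ∪ {ε | ∀ n : ℤ, 1 ≤ n → ε n = 2}



section Aux

variable (r : Fin 3 → ℝ)

noncomputable def seqQ (a : ℕ → Fin 3) : ℝ :=
  ∑' k : ℕ, (∏ i ∈ Finset.range k, r (a i)) * alphaOf r (a k)

variable {r} (hr : ∀ i, 0 < r i) (hsum : r 0 + r 1 + r 2 = 1)
include hr hsum
set_option linter.unusedSectionVars false

lemma alpha_nonneg (e : Fin 3) : 0 ≤ alphaOf r e := by
  have h0 := hr 0; have h1 := hr 1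
  fin_cases e <;> simp [alphaOf] <;> linarith

lemma alpha_add_le (e : Fin 3) : alphaOf r e + r e ≤ 1 := by
  have h0 := hr 0; have h1 := hr 1; have h2 := hr 2
  fin_cases e <;> simp [alphaOf] <;> linarith

lemma alpha_add_lt (e : Fin 3) (he : e ≠ 2) : alphaOf r e + r e < 1 := by
  have h0 := hr 0; have h1 := hr 1; have h2 := hr 2
  fin_cases e
  · simp only [alphaOf]; norm_num; linarith
  · simp only [alphaOf]; norm_num; linarith
  · exact absurd rfl he

lemma term_nonneg (a : ℕ → Fin 3) (k : ℕ) :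
    0 ≤ (∏ i ∈ Finset.range k, r (a i)) * alphaOf r (a k) := by
  apply mul_nonneg
  · exact Finset.prod_nonneg fun i _ => (hr (a i)).le
  · exact alpha_nonneg hr hsum _

lemma partial_sum_le (a : ℕ → Fin 3) (N : ℕ) :
    ∑ k ∈ Finset.range N, (∏ i ∈ Finset.range k, r (a i)) * alphaOf r (a k)
      ≤ 1 - ∏ i ∈ Finset.range N, r (a i) := by
  induction N with
  | zero => simp
  | succ N ih =>
    rw [Finset.sum_range_succ, Finset.prod_range_succ]
    have hP : (0:ℝ) ≤ ∏ i ∈ Finset.range N, r (a i) :=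
      Finset.prod_nonneg fun i _ => (hr (a i)).le
    have hα : alphaOf r (a N) ≤ 1 - r (a N) := by
      have := alpha_add_le hr hsum (a N); linarith
    nlinarith [mul_le_mul_of_nonneg_left hα hP]

lemma seqQ_summable (a : ℕ → Fin 3) :
    Summable (fun k => (∏ i ∈ Finset.range k, r (a i)) * alphaOf r (a k)) := by
  apply summable_of_sum_range_le (c := 1) (term_nonneg hr hsum a)
  intro n
  have := partial_sum_le hr hsum a n
  have hP : (0:ℝ) ≤ ∏ i ∈ Finset.range n, r (a i) :=
    Finset.prod_nonneg fun i _ => (hr (a i)).le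
  linarith

lemma seqQ_nonneg (a : ℕ → Fin 3) : 0 ≤ seqQ r a :=
  tsum_nonneg (term_nonneg hr hsum a)

lemma seqQ_le_one (a : ℕ → Fin 3) : seqQ r a ≤ 1 := by
  apply Summable.tsum_le_of_sum_range_le (seqQ_summable hr hsum a)
  intro n
  have := partial_sum_le hr hsum a n
  have hP : (0:ℝ) ≤ ∏ i ∈ Finset.range n, r (a i) :=
    Finset.prod_nonneg fun i _ => (hr (a i)).le
  linarith

lemma seqQ_rec (a : ℕ → Fin 3) :
    seqQ r a = alphaOf r (a 0) + r (a 0) * seqQ r (fun k => a (k + 1)) := by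
  rw [seqQ, Summable.tsum_eq_zero_add (seqQ_summable hr hsum a)]
  simp only [Finset.prod_range_zero, one_mul]
  congr 1
  rw [seqQ, ← tsum_mul_left]
  congr 1; funext k
  rw [Finset.prod_range_succ']
  ring

lemma seqQ_lt_one (a : ℕ → Fin 3) (m : ℕ) (hm : a m ≠ 2) : seqQ r a < 1 := by
  induction m generalizing a with
  | zero =>
    rw [seqQ_rec hr hsum a]
    have h1 := seqQ_le_one hr hsum (fun k => a (k + 1))
    have h2 := alpha_add_lt hr hsum (a 0) hm
    nlinarith [hr (a 0)]
  | succ m ih =>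
    rw [seqQ_rec hr hsum a]
    have h1 := ih (fun k => a (k + 1)) hm
    have h2 := alpha_add_le hr hsum (a 0)
    nlinarith [hr (a 0)]

end Aux

/-- For every `ε ∈ Σ''` with `ε₀ ≠ 1`, the points `J_r(ε)` and
`J_r(σ̂ε)` lie in `[0,1)²` and the semiconjugacy `J_r(σ̂ε) = B̂_r(J_r(ε))` holds. -/
theorem codingMap_semiconjugacy
    (r : Fin 3 → ℝ) (hr : ∀ i, 0 < r i) (hsum : r 0 + r 1 + r 2 = 1)
    (ε : ℤ → Fin 3) (hε : ε ∉ badSet) (hε0 : ε 0 ≠ 1) :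
    codingMap r ε ∈ unitSquare ∧ codingMap r (shiftMap ε) ∈ unitSquare ∧
      codingMap r (shiftMap ε) = bakerMap r (codingMap r ε) := by
  have h0 := hr 0; have h1 := hr 1; have h2 := hr 2
  -- the four sequences
  have hJ : codingMap r ε =
      (seqQ r (fun k : ℕ => ε (k : ℤ)), seqQ r (fun k : ℕ => ε (-(k + 1) : ℤ))) := rfl
  have hJs : codingMap r (shiftMap ε) =
      (seqQ r (fun k : ℕ => ε ((k : ℤ) + 1)), seqQ r (fun k : ℕ => ε (-((k : ℤ) + 1) + 1))) := rfl
  have e1 : (fun k : ℕ => ε (-((k : ℤ) + 1) + 1)) = (fun k : ℕ => ε (-(k : ℤ))) := by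
    funext k; congr 1; ring
  rw [e1] at hJs
  set q : ℝ := seqQ r (fun k : ℕ => ε (k : ℤ)) with hqdef
  set p : ℝ := seqQ r (fun k : ℕ => ε (-(k + 1) : ℤ)) with hpdef
  set q' : ℝ := seqQ r (fun k : ℕ => ε ((k : ℤ) + 1)) with hq'def
  set p' : ℝ := seqQ r (fun k : ℕ => ε (-(k : ℤ))) with hp'def
  -- recursions
  have hrecq : q = alphaOf r (ε 0) + r (ε 0) * q' := by
    rw [hqdef, seqQ_rec hr hsum]
    have t : (fun k : ℕ => ε ((k + 1 : ℕ) : ℤ)) = (fun k : ℕ => ε ((k : ℤ) + 1)) := by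
      funext k
      congr 1
    have t0 : ε ((0 : ℕ) : ℤ) = ε 0 := by norm_num
    rw [t0, t]
  have hrecp : p' = alphaOf r (ε 0) + r (ε 0) * p := by
    rw [hp'def, seqQ_rec hr hsum]
    have t : (fun k : ℕ => ε (-((k + 1 : ℕ) : ℤ))) = (fun k : ℕ => ε (-(k + 1) : ℤ)) := by
      funext k
      congr 1
    have t0 : ε (-((0 : ℕ) : ℤ)) = ε 0 := by norm_num
    rw [t0, t]
  -- bounds
  have hq'0 : 0 ≤ q' := seqQ_nonneg hr hsum _
  have hp0 : 0 ≤ p := seqQ_nonneg hr hsum _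
  have hq0 : 0 ≤ q := seqQ_nonneg hr hsum _
  have hp'0 : 0 ≤ p' := seqQ_nonneg hr hsum _
  -- strict bounds from badSet
  simp only [badSet, Set.mem_union, Set.mem_setOf_eq, not_or, not_and_or, not_forall] at hε
  obtain ⟨hA, hB⟩ := hε
  have hq'1 : q' < 1 := by
    obtain ⟨n, hn⟩ := hB
    push_neg at hn
    obtain ⟨hn1, hn2⟩ := hn
    apply seqQ_lt_one hr hsum _ (n - 1).toNat
    have hcast : ((n - 1).toNat : ℤ) + 1 = n := by
      rw [Int.toNat_of_nonneg (by linarith)]; ring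
    show ε (((n - 1).toNat : ℤ) + 1) ≠ 2
    rw [hcast]; exact hn2
  have hp1 : p < 1 := by
    rcases hA with hA | hA
    · obtain ⟨n, hn⟩ := hA
      push_neg at hn
      obtain ⟨hn1, hn2⟩ := hn
      apply seqQ_lt_one hr hsum _ (-n - 1).toNat
      have hcast : -(((-n - 1).toNat : ℤ) + 1) = n := by
        rw [Int.toNat_of_nonneg (by linarith)]; ring
      show ε (-(((-n - 1).toNat : ℤ) + 1)) ≠ 2
      rw [hcast]; exact hn2
    · exact absurd hε0 hA
  have hαle := alpha_add_le hr hsum (ε 0)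
  have hα0 := alpha_nonneg hr hsum (ε 0)
  have hre := hr (ε 0)
  have hq1 : q < 1 := by nlinarith
  have hp'1 : p' < 1 := by nlinarith
  -- case on ε 0
  have hcases : ε 0 = 0 ∨ ε 0 = 2 := by
    have : ∀ e : Fin 3, e ≠ 1 → e = 0 ∨ e = 2 := by decide
    exact this _ hε0
  refine ⟨?_, ?_, ?_⟩
  · rw [hJ]; exact ⟨⟨hq0, hq1⟩, ⟨hp0, hp1⟩⟩
  · rw [hJs]; exact ⟨⟨hq'0, hq'1⟩, ⟨hp'0, hp'1⟩⟩
  · rw [hJ, hJs, bakerMap]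
    rcases hcases with he | he
    · rw [he] at hrecq hrecp
      simp only [alphaOf, Matrix.cons_val_zero] at hrecq hrecp
      have hqlt : q < r 0 := by nlinarith
      simp only [hqlt, if_true]
      refine Prod.ext ?_ ?_
      · simp only; rw [hrecq]; field_simp; ring
      · simp only; rw [hrecp]; ring
    · rw [he] at hrecq hrecp
      simp only [alphaOf, Matrix.cons_val_two, Matrix.tail_cons, Matrix.head_cons] at hrecq hrecp
      have hnlt1 : ¬ q < r 0 := by push_neg; nlinarith
      have hnlt2 : ¬ q < r 0 + r 1 := by push_neg; nlinarith
      simp only [hnlt1, hnlt2, if_false]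
      refine Prod.ext ?_ ?_
      · simp only; rw [hrecq]; field_simp; ring
      · simp only; rw [hrecp]; ring
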